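/- Let X0 ∈ ℂ^{n1×n2×n3} have skinny natural t-SVD X0 = U ⋆ S ⋆ V^H, and let A = U ⋆ V^H + W for some W ∈ ℂ^{n1×n2×n3} with U^H ⋆ W = 0, W ⋆ V = 0, and tensor spectral norm ‖W‖ ≤ 1. Then A is a subgradient of the tensor nuclear norm at X0: for every X ∈ ℂ^{n1×n2×n3}, ‖X‖_* ≥ ‖X0‖_* + Re⟨A, X − X0⟩. -/

import Mathlib

namespace TC

open scoped BigOperators ComplexConjugate
open Matrix

/-- A third-order complex tensor. -/
abbrev Tensor (n1 n2 n3 : ℕ) := Fin n1 → Fin n2 → Fin n3 → ℂ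

/-- The `k`-th frontal slice of a tensor. -/
def slice {n1 n2 n3 : ℕ} (A : Tensor n1 n2 n3) (k : Fin n3) : Matrix (Fin n1) (Fin n2) ℂ :=
  Matrix.of fun i j => A i j k

/-- The natural tensor-tensor product: slice-wise matrix multiplication. -/
noncomputable def tprod {n1 n2 l n3 : ℕ} (A : Tensor n1 n2 n3) (B : Tensor n2 l n3) : Tensor n1 l n3 :=
  fun i j k => ∑ s, A i s k * B s j k

/-- Slice-wise conjugate transpose. -/
noncomputable def hconj {n1 n2 n3 : ℕ} (A : Tensor n1 n2 n3) : Tensor n2 n1 n3 :=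
  fun i j k => (starRingEnd ℂ) (A j i k)

/-- Mode-3 product: apply the matrix `T` to every mode-3 fiber. -/
noncomputable def mode3 {n1 n2 m n : ℕ} (T : Matrix (Fin m) (Fin n) ℂ) (A : Tensor n1 n2 n) :
    Tensor n1 n2 m :=
  fun i j k => ∑ s, T k s * A i j s

/-- Frobenius norm of a tensor. -/
noncomputable def frobNorm {n1 n2 n3 : ℕ} (A : Tensor n1 n2 n3) : ℝ :=
  Real.sqrt (∑ i, ∑ j, ∑ k, ‖A i j k‖ ^ 2)

/-- Entrywise maximum modulus of a tensor. -/
noncomputable def infNorm {n1 n2 n3 : ℕ} (A : Tensor n1 n2 n3) : ℝ :=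
  ⨆ i, ⨆ j, ⨆ k, ‖A i j k‖

/-- `‖A‖_{1↦2}`: largest Frobenius norm of a lateral slice (column). -/
noncomputable def norm1to2 {n1 n2 n3 : ℕ} (A : Tensor n1 n2 n3) : ℝ :=
  ⨆ j, Real.sqrt (∑ i, ∑ k, ‖A i j k‖ ^ 2)

/-- `‖A‖_{2↦∞}`: largest Frobenius norm of a horizontal slice (row). -/
noncomputable def norm2toInf {n1 n2 n3 : ℕ} (A : Tensor n1 n2 n3) : ℝ :=
  ⨆ i, Real.sqrt (∑ j, ∑ k, ‖A i j k‖ ^ 2)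

/-- `‖A‖_{∞,2}`. -/
noncomputable def normInf2 {n1 n2 n3 : ℕ} (A : Tensor n1 n2 n3) : ℝ :=
  max (norm1to2 A) (norm2toInf A)

/-- Singular values of a complex matrix: square roots of the eigenvalues of `Mᴴ * M`. -/
noncomputable def singVals {m n : ℕ} (M : Matrix (Fin m) (Fin n) ℂ) : Fin n → ℝ :=
  fun i => Real.sqrt ((Matrix.isHermitian_conjTranspose_mul_self M).eigenvalues i)

/-- Matrix spectral norm: the largest singular value. -/
noncomputable def specNormMat {m n : ℕ} (M : Matrix (Fin m) (Fin n) ℂ) : ℝ :=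
  ⨆ i, singVals M i

/-- Matrix nuclear norm: sum of the singular values. -/
noncomputable def nucNormMat {m n : ℕ} (M : Matrix (Fin m) (Fin n) ℂ) : ℝ :=
  ∑ i, singVals M i

/-- Tensor spectral norm: the maximum singular value over all frontal slices. -/
noncomputable def tSpecNorm {n1 n2 n3 : ℕ} (A : Tensor n1 n2 n3) : ℝ :=
  ⨆ k, specNormMat (slice A k)

/-- Tensor nuclear norm: the sum of all singular values of all frontal slices. -/
noncomputable def tNucNorm {n1 n2 n3 : ℕ} (A : Tensor n1 n2 n3) : ℝ :=
  ∑ k, nucNormMat (slice A k)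

/-- Smallest singular value. -/
noncomputable def sigmaMin {m n : ℕ} (M : Matrix (Fin m) (Fin n) ℂ) : ℝ :=
  ⨅ i, singVals M i

/-- Condition number `κ(T) = σ_max(T) / σ_min(T)`. -/
noncomputable def kappa {m n : ℕ} (M : Matrix (Fin m) (Fin n) ℂ) : ℝ :=
  specNormMat M / sigmaMin M

/-- Entrywise maximum modulus of a matrix. -/
noncomputable def matInfNorm {m n : ℕ} (M : Matrix (Fin m) (Fin n) ℂ) : ℝ :=
  ⨆ i, ⨆ j, ‖M i j‖

/-- `‖M‖_{1↦2}`: largest `ℓ2` norm of the columns of `M`. -/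
noncomputable def col2Norm {m n : ℕ} (M : Matrix (Fin m) (Fin n) ℂ) : ℝ :=
  ⨆ j, Real.sqrt (∑ i, ‖M i j‖ ^ 2)

/-- Moore–Penrose pseudo-inverse of a matrix of full column rank. -/
noncomputable def pinv {N3 n3 : ℕ} (T : Matrix (Fin N3) (Fin n3) ℂ) :
    Matrix (Fin n3) (Fin N3) ℂ :=
  (Tᴴ * T)⁻¹ * Tᴴ

/-- `ρ(T) = N3 · max(‖T‖_∞², ‖T†‖_∞²)`. -/
noncomputable def rho {N3 n3 : ℕ} (T : Matrix (Fin N3) (Fin n3) ℂ) : ℝ :=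
  (N3 : ℝ) * max (matInfNorm T ^ 2) (matInfNorm (pinv T) ^ 2)

/-- `T` has full column rank. -/
def FullColRank {N3 n3 : ℕ} (T : Matrix (Fin N3) (Fin n3) ℂ) : Prop := T.rank = n3

/-- The sampling operator `S_Ω`. -/
noncomputable def sampleOp {n1 n2 n3 : ℕ} (Ω : Finset (Fin n1 × Fin n2 × Fin n3)) (A : Tensor n1 n2 n3) :
    Tensor n1 n2 n3 :=
  fun i j k => if (i, j, k) ∈ Ω then A i j k else 0

open Classical in
/-- The probability, under Bernoulli(p) sampling of each index independently, that the
random sampled index set satisfies the event `E`. -/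
noncomputable def berProb {ι : Type*} [Fintype ι] (p : ℝ) (E : Finset ι → Prop) : ℝ :=
  ∑ Ω ∈ (Finset.univ : Finset ι).powerset,
    if E Ω then p ^ Ω.card * (1 - p) ^ (Fintype.card ι - Ω.card) else 0

/-- Skinny natural t-SVD of tubal rank `r`: `A = U ⋆ S ⋆ Vᴴ` with slice-wise orthonormal
columns for `U`, `V`, slice-wise diagonal `S` with nonnegative (real) diagonal entries,
and no zero tube on the diagonal of `S` (so `r` is exactly the tubal rank of `A`). -/
structure IsSkinnyTSVD {n1 n2 n3 : ℕ} (A : Tensor n1 n2 n3) (r : ℕ)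
    (U : Tensor n1 r n3) (S : Tensor r r n3) (V : Tensor n2 r n3) : Prop where
  factor : A = tprod U (tprod S (hconj V))
  U_orth : ∀ k : Fin n3, (slice U k)ᴴ * slice U k = 1
  V_orth : ∀ k : Fin n3, (slice V k)ᴴ * slice V k = 1
  S_diag : ∀ (k : Fin n3) (i j : Fin r), i ≠ j → S i j k = 0
  S_real_nonneg : ∀ (k : Fin n3) (i : Fin r), (S i i k).im = 0 ∧ 0 ≤ (S i i k).re
  tubes_ne : ∀ i : Fin r, ∃ k : Fin n3, S i i k ≠ 0

/-- Full natural t-SVD: `A = U ⋆ S ⋆ Vᴴ` with slice-wise unitary `U`, `V` and slice-wise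
diagonal `S` with nonnegative (real) diagonal entries. -/
structure IsFullTSVD {n1 n2 n3 : ℕ} (A : Tensor n1 n2 n3)
    (U : Tensor n1 n1 n3) (S : Tensor n1 n2 n3) (V : Tensor n2 n2 n3) : Prop where
  factor : A = tprod U (tprod S (hconj V))
  U_unitary : ∀ k : Fin n3, (slice U k)ᴴ * slice U k = 1
  V_unitary : ∀ k : Fin n3, (slice V k)ᴴ * slice V k = 1
  S_diag : ∀ (k : Fin n3) (i : Fin n1) (j : Fin n2), (i : ℕ) ≠ (j : ℕ) → S i j k = 0
  S_real_nonneg : ∀ (k : Fin n3) (i : Fin n1) (j : Fin n2), (i : ℕ) = (j : ℕ) →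
    (S i j k).im = 0 ∧ 0 ≤ (S i j k).re

/-- `(S - τ)₊`: replace every diagonal entry `s` of each frontal slice by `max (s - τ) 0`. -/
noncomputable def shrink {n1 n2 n3 : ℕ} (τ : ℝ) (S : Tensor n1 n2 n3) : Tensor n1 n2 n3 :=
  fun i j k => if (i : ℕ) = (j : ℕ) then ((max ((S i j k).re - τ) 0 : ℝ) : ℂ) else S i j k

/-- The projection `P_S` onto the tangent subspace spanned by the singular tensors. -/
noncomputable def PS {n1 n2 n3 r : ℕ} (U : Tensor n1 r n3) (V : Tensor n2 r n3) (Z : Tensor n1 n2 n3) :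
    Tensor n1 n2 n3 :=
  tprod U (tprod (hconj U) Z) + tprod Z (tprod V (hconj V))
    - tprod U (tprod (hconj U) (tprod Z (tprod V (hconj V))))

/-- The complementary projection `P_{S⊥}`. -/
noncomputable def PSperp {n1 n2 n3 r : ℕ} (U : Tensor n1 r n3) (V : Tensor n2 r n3) (Z : Tensor n1 n2 n3) :
    Tensor n1 n2 n3 :=
  Z - PS U V Z

/-- Operator norm of a map between tensor spaces, with respect to Frobenius norms. -/
noncomputable def opNormT {a b c d e f : ℕ} (L : Tensor a b c → Tensor d e f) : ℝ :=
  sSup {x : ℝ | ∃ Z : Tensor a b c, frobNorm Z ≤ 1 ∧ x = frobNorm (L Z)}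

/-- Tensor column basis `ξ_i ∈ ℂ^{n×1×m}`. -/
noncomputable def xiB (n m : ℕ) (i : Fin n) : Tensor n 1 m := fun a _ _ => if a = i then 1 else 0

/-- Tensor frontal-slice basis `ζ_k ∈ ℂ^{1×1×n}`. -/
noncomputable def zetaB (n : ℕ) (k : Fin n) : Tensor 1 1 n := fun _ _ c => if c = k then 1 else 0

/-- Standard inner product of tensors. -/
noncomputable def tinner {n1 n2 n3 : ℕ} (A B : Tensor n1 n2 n3) : ℂ :=
  ∑ i, ∑ j, ∑ k, (starRingEnd ℂ) (A i j k) * B i j k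

/-- Standard basis tensor `e_{ijk}`. -/
noncomputable def eBasis (n1 n2 n3 : ℕ) (i : Fin n1) (j : Fin n2) (k : Fin n3) : Tensor n1 n2 n3 :=
  fun a b c => if a = i ∧ b = j ∧ c = k then 1 else 0

/-- `X` is the unique optimal solution of:
minimize `‖T(X̂)‖_*` subject to `S_Ω(X̂) = S_Ω(X)`. -/
def UniqueSolution {n1 n2 n3 N3 : ℕ} (T : Matrix (Fin N3) (Fin n3) ℂ) (X : Tensor n1 n2 n3)
    (Ω : Finset (Fin n1 × Fin n2 × Fin n3)) : Prop :=
  ∀ Y : Tensor n1 n2 n3, sampleOp Ω Y = sampleOp Ω X → Y ≠ X →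
    tNucNorm (mode3 T X) < tNucNorm (mode3 T Y)

/-- The tensor incoherence conditions with parameters `μ, ν`. -/
structure Incoherent {n1 n2 n3 N3 r : ℕ} (T : Matrix (Fin N3) (Fin n3) ℂ)
    (U : Tensor n1 r N3) (V : Tensor n2 r N3) (μ ν : ℝ) : Prop where
  hU : ∀ i : Fin n1,
    frobNorm (tprod (hconj U) (xiB n1 N3 i)) ≤ Real.sqrt (μ * r * N3 / n1)
  hV : ∀ j : Fin n2,
    frobNorm (tprod (hconj V) (xiB n2 N3 j)) ≤ Real.sqrt (μ * r * N3 / n2)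
  hUT : ∀ (i : Fin n1) (k : Fin n3),
    frobNorm (tprod (tprod (hconj U) (xiB n1 N3 i)) (mode3 T (zetaB n3 k)))
      ≤ Real.sqrt (ν * r / n1) * col2Norm T
  hVT : ∀ (j : Fin n2) (k : Fin n3),
    frobNorm (tprod (tprod (hconj V) (xiB n2 N3 j)) (mode3 T (zetaB n3 k)))
      ≤ Real.sqrt (ν * r / n2) * col2Norm T

/-- The operator `P_S T R_Ω T† P_S − P_S T T† P_S` on `ℂ^{n1×n2×N3}`, `R_Ω = p⁻¹ S_Ω`. -/
noncomputable def isoOp {n1 n2 n3 N3 r : ℕ} (T : Matrix (Fin N3) (Fin n3) ℂ)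
    (U : Tensor n1 r N3) (V : Tensor n2 r N3)
    (Ω : Finset (Fin n1 × Fin n2 × Fin n3)) (p : ℝ) :
    Tensor n1 n2 N3 → Tensor n1 n2 N3 :=
  fun Z =>
    PS U V (mode3 T ((p⁻¹ : ℝ) • sampleOp Ω (mode3 (pinv T) (PS U V Z))))
      - PS U V (mode3 T (mode3 (pinv T) (PS U V Z)))

/-- The dual-certificate conditions (a) `(T T† − T S_Ω T†)ᴴ Y = 0` (the adjoint being
`T̃ Tᴴ − T̃ S_Ω Tᴴ` with `T̃ = (T†)ᴴ`), (b) `‖P_S(Y) − U ⋆ Vᴴ‖_F ≤ p/(8 κ(T))`, and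
(c) `‖P_{S⊥}(Y)‖ ≤ 1/2` in tensor spectral norm. -/
def DualCert {n1 n2 n3 N3 r : ℕ} (T : Matrix (Fin N3) (Fin n3) ℂ)
    (U : Tensor n1 r N3) (V : Tensor n2 r N3)
    (Ω : Finset (Fin n1 × Fin n2 × Fin n3)) (p : ℝ) (Y : Tensor n1 n2 N3) : Prop :=
  (mode3 (pinv T)ᴴ (mode3 Tᴴ Y) - mode3 (pinv T)ᴴ (sampleOp Ω (mode3 Tᴴ Y)) = 0) ∧
  frobNorm (PS U V Y - tprod U (hconj V)) ≤ p / (8 * kappa T) ∧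
  tSpecNorm (PSperp U V Y) ≤ 1 / 2

section AuxSubgrad
open scoped ComplexOrder
open scoped MatrixOrder

noncomputable def nsq {n : ℕ} (v : Fin n → ℂ) : ℝ := ∑ i, ‖v i‖ ^ 2

lemma nsq_nonneg {n : ℕ} (v : Fin n → ℂ) : 0 ≤ nsq v :=
  Finset.sum_nonneg fun _ _ => sq_nonneg _

lemma star_dot_self_re' {n : ℕ} (v : Fin n → ℂ) : (star v ⬝ᵥ v).re = nsq v := by
  simp [dotProduct, nsq, Complex.re_sum, ← Complex.normSq_eq_norm_sq, Complex.normSq_eq_conj_mul_self,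
    Complex.normSq_apply]

lemma star_mulVec_dot {m n : ℕ} (M : Matrix (Fin m) (Fin n) ℂ) (v : Fin n → ℂ) (w : Fin m → ℂ) :
    star (M *ᵥ v) ⬝ᵥ w = star v ⬝ᵥ (Mᴴ *ᵥ w) := by
  rw [star_mulVec, dotProduct_mulVec]

lemma nsq_mulVec {m n : ℕ} (M : Matrix (Fin m) (Fin n) ℂ) (v : Fin n → ℂ) :
    nsq (M *ᵥ v) = (star v ⬝ᵥ ((Mᴴ * M) *ᵥ v)).re := by
  rw [← star_dot_self_re', star_mulVec_dot, mulVec_mulVec]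

lemma star_dot_le {n : ℕ} (x y : Fin n → ℂ) :
    ‖star x ⬝ᵥ y‖ ≤ Real.sqrt (nsq x) * Real.sqrt (nsq y) := by
  have h := norm_inner_le_norm (𝕜 := ℂ)
    (WithLp.toLp 2 x) (WithLp.toLp 2 y)
  rw [EuclideanSpace.inner_toLp_toLp, dotProduct_comm] at h
  have hx : ‖WithLp.toLp 2 x‖ = Real.sqrt (nsq x) := by
    rw [EuclideanSpace.norm_eq]; rfl
  have hy : ‖WithLp.toLp 2 y‖ = Real.sqrt (nsq y) := by
    rw [EuclideanSpace.norm_eq]; rfl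
  rw [hx, hy] at h; exact h

lemma re_dot_hermitian_le {n : ℕ} {H : Matrix (Fin n) (Fin n) ℂ} (hH : H.IsHermitian)
    (c : ℝ) (hc : ∀ i, hH.eigenvalues i ≤ c) (v : Fin n → ℂ) :
    (star v ⬝ᵥ (H *ᵥ v)).re ≤ c * nsq v := by
  set Q : Matrix (Fin n) (Fin n) ℂ := (hH.eigenvectorUnitary : Matrix (Fin n) (Fin n) ℂ) with hQ
  have hQm : Q * Qᴴ = 1 := by
    rw [← Matrix.star_eq_conjTranspose]; exact Unitary.coe_mul_star_self hH.eigenvectorUnitary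
  set u : Fin n → ℂ := Qᴴ *ᵥ v with hu
  have hvu : star v ⬝ᵥ (H *ᵥ v) = star u ⬝ᵥ ((diagonal (RCLike.ofReal ∘ hH.eigenvalues)) *ᵥ u) := by
    rw [hu, star_mulVec_dot, conjTranspose_conjTranspose, mulVec_mulVec, mulVec_mulVec]
    conv_lhs => rw [hH.spectral_theorem, Unitary.conjStarAlgAut_apply, Matrix.star_eq_conjTranspose]
  have huv : nsq u = nsq v := by
    rw [← star_dot_self_re', ← star_dot_self_re', hu, star_mulVec_dot,
      conjTranspose_conjTranspose, mulVec_mulVec, hQm, one_mulVec]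
  rw [hvu, ← huv]
  have hre : (star u ⬝ᵥ (diagonal (RCLike.ofReal ∘ hH.eigenvalues) *ᵥ u)).re
      = ∑ i, hH.eigenvalues i * ‖u i‖ ^ 2 := by
    simp [dotProduct, mulVec_diagonal, Complex.re_sum, nsq]
    congr 1; funext i
    rw [Complex.sq_norm, Complex.normSq_apply]
    ring
  rw [hre, nsq, Finset.mul_sum]
  exact Finset.sum_le_sum fun i _ => mul_le_mul_of_nonneg_right (hc i) (sq_nonneg _)

lemma singVals_le_spec {m n : ℕ} (M : Matrix (Fin m) (Fin n) ℂ) (i : Fin n) :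
    singVals M i ≤ specNormMat M :=
  le_ciSup (Set.Finite.bddAbove (Set.finite_range _)) i

lemma specNormMat_nonneg {m n : ℕ} (M : Matrix (Fin m) (Fin n) ℂ) : 0 ≤ specNormMat M :=
  Real.iSup_nonneg fun _ => Real.sqrt_nonneg _

lemma nsq_mulVec_le {m n : ℕ} (M : Matrix (Fin m) (Fin n) ℂ) (v : Fin n → ℂ) :
    nsq (M *ᵥ v) ≤ specNormMat M ^ 2 * nsq v := by
  rw [nsq_mulVec]
  refine re_dot_hermitian_le (Matrix.isHermitian_conjTranspose_mul_self M) _ (fun i => ?_) v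
  have h0 : 0 ≤ (Matrix.isHermitian_conjTranspose_mul_self M).eigenvalues i :=
    (Matrix.posSemidef_conjTranspose_mul_self M).eigenvalues_nonneg i
  calc (Matrix.isHermitian_conjTranspose_mul_self M).eigenvalues i
      = (singVals M i) ^ 2 := (Real.sq_sqrt h0).symm
    _ ≤ specNormMat M ^ 2 :=
        pow_le_pow_left₀ (Real.sqrt_nonneg _) (singVals_le_spec M i) 2

lemma re_trace_le_nucNorm {m n : ℕ} (A X : Matrix (Fin m) (Fin n) ℂ)
    (hA : ∀ v, nsq (A *ᵥ v) ≤ nsq v) :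
    (Matrix.trace (Aᴴ * X)).re ≤ nucNormMat X := by
  set hH := Matrix.isHermitian_conjTranspose_mul_self X with hHdef
  set Q : Matrix (Fin n) (Fin n) ℂ := (hH.eigenvectorUnitary : Matrix (Fin n) (Fin n) ℂ) with hQdef
  have hQs : Qᴴ * Q = 1 := by
    rw [← Matrix.star_eq_conjTranspose]; exact Unitary.coe_star_mul_self hH.eigenvectorUnitary
  have hQm : Q * Qᴴ = 1 := by
    rw [← Matrix.star_eq_conjTranspose]; exact Unitary.coe_mul_star_self hH.eigenvectorUnitary
  have htr : Matrix.trace (Qᴴ * (Aᴴ * X) * Q) = Matrix.trace (Aᴴ * X) := by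
    rw [Matrix.trace_mul_comm, ← Matrix.mul_assoc, hQm, Matrix.one_mul]
  have hdiag : ∀ i, (Qᴴ * (Aᴴ * X) * Q) i i
      = star (fun a => Q a i) ⬝ᵥ ((Aᴴ * X) *ᵥ fun a => Q a i) := by
    intro i
    simp only [Matrix.mul_apply, conjTranspose_apply, dotProduct, mulVec, Pi.star_apply,
      Finset.sum_mul, Finset.mul_sum]
    rw [Finset.sum_comm]
    exact Finset.sum_congr rfl fun a _ => Finset.sum_congr rfl fun b _ =>
      Finset.sum_congr rfl fun c _ => by ring
  have hterm : ∀ i, ((Qᴴ * (Aᴴ * X) * Q) i i).re ≤ singVals X i := by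
    intro i
    set q : Fin n → ℂ := ⇑(hH.eigenvectorBasis i) with hq
    have hcol : (fun a => Q a i) = q := by
      funext a; rw [hQdef]; simp [hq]
    have hq1 : star q ⬝ᵥ q = 1 := by
      have h1 : (Qᴴ * Q) i i = 1 := by rw [hQs]; simp
      rw [← h1]
      simp [Matrix.mul_apply, conjTranspose_apply, dotProduct, ← hcol]
    have hnsq : nsq q = 1 := by
      rw [← star_dot_self_re', hq1]; rfl
    have hXq : nsq (X *ᵥ q) = hH.eigenvalues i := by
      rw [nsq_mulVec, hq, hH.mulVec_eigenvectorBasis]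
      have h2 : star ⇑(hH.eigenvectorBasis i) ⬝ᵥ (hH.eigenvalues i • ⇑(hH.eigenvectorBasis i))
          = (hH.eigenvalues i : ℂ) * (star ⇑(hH.eigenvectorBasis i) ⬝ᵥ ⇑(hH.eigenvectorBasis i)) := by
        simp only [dotProduct, Pi.smul_apply, Complex.real_smul, Finset.mul_sum]
        exact Finset.sum_congr rfl fun a _ => by ring
      rw [h2, ← hq, hq1, mul_one, Complex.ofReal_re]
    have hAq : nsq (A *ᵥ q) ≤ 1 := by rw [← hnsq]; exact hA q
    rw [hdiag i, hcol, ← mulVec_mulVec, ← star_mulVec_dot]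
    calc (star (A *ᵥ q) ⬝ᵥ (X *ᵥ q)).re
        ≤ ‖star (A *ᵥ q) ⬝ᵥ (X *ᵥ q)‖ := Complex.re_le_norm _
      _ ≤ Real.sqrt (nsq (A *ᵥ q)) * Real.sqrt (nsq (X *ᵥ q)) := star_dot_le _ _
      _ ≤ 1 * Real.sqrt (nsq (X *ᵥ q)) := by
          apply mul_le_mul_of_nonneg_right _ (Real.sqrt_nonneg _)
          rw [show (1:ℝ) = Real.sqrt 1 by simp]
          exact Real.sqrt_le_sqrt hAq
      _ = singVals X i := by rw [one_mul, hXq]; rfl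
  rw [← htr, Matrix.trace]
  rw [show (∑ i, (Qᴴ * (Aᴴ * X) * Q).diag i).re = ∑ i, ((Qᴴ * (Aᴴ * X) * Q) i i).re from
    Complex.re_sum _ _]
  exact Finset.sum_le_sum fun i _ => hterm i


-- trace of the psd sqrt equals sum of sqrt-eigenvalues
lemma trace_sqrt {n : ℕ} {H : Matrix (Fin n) (Fin n) ℂ} (hH : H.PosSemidef) :
    Matrix.trace (CFC.sqrt H) = ∑ i, (Real.sqrt (hH.1.eigenvalues i) : ℂ) := by
  have hQs : (star (hH.1.eigenvectorUnitary : Matrix (Fin n) (Fin n) ℂ))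
      * (hH.1.eigenvectorUnitary : Matrix (Fin n) (Fin n) ℂ) = 1 :=
    Unitary.coe_star_mul_self hH.1.eigenvectorUnitary
  rw [CFC.sqrt_eq_cfc, cfc_nnreal_eq_real _ H hH.nonneg, hH.1.cfc_eq, IsHermitian.cfc,
    Unitary.conjStarAlgAut_apply, Matrix.trace_mul_comm, ← Matrix.mul_assoc,
    hQs, Matrix.one_mul, Matrix.trace_diagonal]
  refine Finset.sum_congr rfl fun i _ => ?_
  simp [max_eq_left (hH.eigenvalues_nonneg i)]

lemma nucNormMat_eq_trace_sqrt {m n : ℕ} (M : Matrix (Fin m) (Fin n) ℂ) :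
    nucNormMat M = (Matrix.trace (CFC.sqrt (Mᴴ * M))).re := by
  rw [trace_sqrt (Matrix.posSemidef_conjTranspose_mul_self M), Complex.re_sum]
  exact Finset.sum_congr rfl fun i _ => by rw [Complex.ofReal_re]; rfl

-- nuclear norm of Mu * D * Mvᴴ
lemma nucNormMat_UDV {n1 n2 r : ℕ} (Mu : Matrix (Fin n1) (Fin r) ℂ)
    (Mv : Matrix (Fin n2) (Fin r) ℂ) (d : Fin r → ℝ) (hd : ∀ i, 0 ≤ d i)
    (hU : Muᴴ * Mu = 1) (hV : Mvᴴ * Mv = 1) :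
    nucNormMat (Mu * Matrix.diagonal (fun i => (d i : ℂ)) * Mvᴴ) = ∑ i, d i := by
  set D : Matrix (Fin r) (Fin r) ℂ := Matrix.diagonal (fun i => (d i : ℂ)) with hD
  set X0 : Matrix (Fin n1) (Fin n2) ℂ := Mu * D * Mvᴴ with hX0
  have hDH : Dᴴ = D := by
    rw [hD]
    ext i j
    simp only [Matrix.conjTranspose_apply, Matrix.diagonal_apply]
    by_cases h : i = j
    · subst h
      simp [Complex.conj_ofReal]
    · simp only [if_neg h, if_neg (fun h' => h h'.symm : ¬ j = i), star_zero]
  have hDpsd : D.PosSemidef := by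
    rw [hD]
    exact Matrix.PosSemidef.diagonal fun i => by
      simpa using Complex.zero_le_real.mpr (hd i)
  set B : Matrix (Fin n2) (Fin n2) ℂ := Mv * D * Mvᴴ with hB
  have hBpsd : B.PosSemidef := hDpsd.mul_mul_conjTranspose_same Mv
  have hX0H : X0ᴴ = Mv * D * Muᴴ := by
    rw [hX0, Matrix.conjTranspose_mul, Matrix.conjTranspose_mul,
      Matrix.conjTranspose_conjTranspose, hDH, ← Matrix.mul_assoc]
  have hsq : B ^ 2 = X0ᴴ * X0 := by
    rw [pow_two, hB, hX0, hX0H]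
    calc Mv * D * Mvᴴ * (Mv * D * Mvᴴ)
        = Mv * D * ((Mvᴴ * Mv) * (D * Mvᴴ)) := by simp only [Matrix.mul_assoc]
      _ = Mv * D * (D * Mvᴴ) := by rw [hV, Matrix.one_mul]
      _ = Mv * D * ((Muᴴ * Mu) * (D * Mvᴴ)) := by rw [hU, Matrix.one_mul]
      _ = Mv * D * Muᴴ * (Mu * D * Mvᴴ) := by simp only [Matrix.mul_assoc]
  have hBe : B = CFC.sqrt (X0ᴴ * X0) :=
    (CFC.sqrt_unique (by rw [← pow_two]; exact hsq) hBpsd.nonneg).symm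
  have htrB : Matrix.trace B = ((∑ i, d i : ℝ) : ℂ) := by
    rw [hB, Matrix.trace_mul_comm, ← Matrix.mul_assoc, hV, Matrix.one_mul, hD,
      Matrix.trace_diagonal]
    push_cast
    rfl
  rw [nucNormMat_eq_trace_sqrt, ← hBe, htrB, Complex.ofReal_re]

-- operator-norm bound for A = Mu Mvᴴ + W
lemma nsq_A_le {n1 n2 r : ℕ} (Mu : Matrix (Fin n1) (Fin r) ℂ)
    (Mv : Matrix (Fin n2) (Fin r) ℂ) (W : Matrix (Fin n1) (Fin n2) ℂ)
    (hU : Muᴴ * Mu = 1) (hV : Mvᴴ * Mv = 1)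
    (hUW : Muᴴ * W = 0) (hWV : W * Mv = 0) (hWs : specNormMat W ≤ 1)
    (v : Fin n2 → ℂ) : nsq ((Mu * Mvᴴ + W) *ᵥ v) ≤ nsq v := by
  set A : Matrix (Fin n1) (Fin n2) ℂ := Mu * Mvᴴ + W with hA
  set P : Matrix (Fin n2) (Fin n2) ℂ := Mv * Mvᴴ with hP
  have hPH : Pᴴ = P := by
    rw [hP, Matrix.conjTranspose_mul, Matrix.conjTranspose_conjTranspose]
  have hPP : P * P = P := by
    rw [hP]
    calc Mv * Mvᴴ * (Mv * Mvᴴ) = Mv * ((Mvᴴ * Mv) * Mvᴴ) := by simp only [Matrix.mul_assoc]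
      _ = Mv * Mvᴴ := by rw [hV, Matrix.one_mul]
  have hWH : Wᴴ * Mu = 0 := by
    have := congrArg Matrix.conjTranspose hUW
    rwa [Matrix.conjTranspose_mul, Matrix.conjTranspose_conjTranspose,
      Matrix.conjTranspose_zero] at this
  have hAA : Aᴴ * A = P + Wᴴ * W := by
    rw [hA, Matrix.conjTranspose_add, Matrix.conjTranspose_mul,
      Matrix.conjTranspose_conjTranspose]
    rw [Matrix.add_mul, Matrix.mul_add, Matrix.mul_add]
    have h1 : Mv * Muᴴ * (Mu * Mvᴴ) = P := by
      rw [hP]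
      calc Mv * Muᴴ * (Mu * Mvᴴ) = Mv * ((Muᴴ * Mu) * Mvᴴ) := by simp only [Matrix.mul_assoc]
        _ = Mv * Mvᴴ := by rw [hU, Matrix.one_mul]
    have h2 : Mv * Muᴴ * W = 0 := by
      rw [Matrix.mul_assoc, hUW, Matrix.mul_zero]
    have h3 : Wᴴ * (Mu * Mvᴴ) = 0 := by
      rw [← Matrix.mul_assoc, hWH, Matrix.zero_mul]
    rw [h1, h2, h3, add_zero, zero_add]
  set t : ℝ := (star v ⬝ᵥ (P *ᵥ v)).re with ht
  have hte : t = nsq (Mvᴴ *ᵥ v) := by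
    rw [nsq_mulVec, Matrix.conjTranspose_conjTranspose, ht, hP]
  have hAv : nsq (A *ᵥ v) = t + nsq (W *ᵥ v) := by
    rw [nsq_mulVec, hAA, Matrix.add_mulVec, dotProduct_add, Complex.add_re, ← nsq_mulVec, ht]
  set w : Fin n2 → ℂ := v - P *ᵥ v with hw
  have hWw : W *ᵥ w = W *ᵥ v := by
    rw [hw, Matrix.mulVec_sub, mulVec_mulVec, hP, ← Matrix.mul_assoc, hWV, Matrix.zero_mul,
      Matrix.zero_mulVec, sub_zero]
  have hnw : nsq w = nsq v - t := by
    rw [← star_dot_self_re', hw]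
    have hsd : star (v - P *ᵥ v) = star v - star (P *ᵥ v) := by
      funext a; simp [Pi.star_apply]
    rw [hsd, sub_dotProduct, dotProduct_sub, dotProduct_sub]
    have e1 : (star (P *ᵥ v) ⬝ᵥ v).re = t := by
      rw [star_mulVec_dot, hPH, ht]
    have e2 : (star (P *ᵥ v) ⬝ᵥ (P *ᵥ v)).re = t := by
      rw [star_mulVec_dot, mulVec_mulVec, hPH, hPP, ht]
    simp only [Complex.sub_re]
    rw [e1, e2, star_dot_self_re', ht]
    ring
  have hWb : nsq (W *ᵥ v) ≤ nsq w := by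
    rw [← hWw]
    calc nsq (W *ᵥ w) ≤ specNormMat W ^ 2 * nsq w := nsq_mulVec_le W w
      _ ≤ 1 * nsq w := by
          apply mul_le_mul_of_nonneg_right _ (nsq_nonneg w)
          calc specNormMat W ^ 2 ≤ 1 ^ 2 :=
                pow_le_pow_left₀ (specNormMat_nonneg W) hWs 2
            _ = 1 := one_pow 2
      _ = nsq w := one_mul _
  calc nsq (A *ᵥ v) = t + nsq (W *ᵥ v) := hAv
    _ ≤ t + nsq w := by linarith
    _ = nsq v := by rw [hnw]; ring

-- the master matrix-level lemma
lemma matrix_subgrad {n1 n2 r : ℕ} (Mu : Matrix (Fin n1) (Fin r) ℂ)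
    (Mv : Matrix (Fin n2) (Fin r) ℂ) (d : Fin r → ℝ) (hd : ∀ i, 0 ≤ d i)
    (W : Matrix (Fin n1) (Fin n2) ℂ)
    (hU : Muᴴ * Mu = 1) (hV : Mvᴴ * Mv = 1)
    (hUW : Muᴴ * W = 0) (hWV : W * Mv = 0) (hWs : specNormMat W ≤ 1)
    (X : Matrix (Fin n1) (Fin n2) ℂ) :
    nucNormMat (Mu * Matrix.diagonal (fun i => (d i : ℂ)) * Mvᴴ)
      + (Matrix.trace ((Mu * Mvᴴ + W)ᴴ
          * (X - Mu * Matrix.diagonal (fun i => (d i : ℂ)) * Mvᴴ))).re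
      ≤ nucNormMat X := by
  set D : Matrix (Fin r) (Fin r) ℂ := Matrix.diagonal (fun i => (d i : ℂ)) with hD
  set X0 : Matrix (Fin n1) (Fin n2) ℂ := Mu * D * Mvᴴ with hX0
  set A : Matrix (Fin n1) (Fin n2) ℂ := Mu * Mvᴴ + W with hA
  have hDH : Dᴴ = D := by
    rw [hD]
    ext i j
    simp only [Matrix.conjTranspose_apply, Matrix.diagonal_apply]
    by_cases h : i = j
    · subst h
      simp [Complex.conj_ofReal]
    · simp only [if_neg h, if_neg (fun h' => h h'.symm : ¬ j = i), star_zero]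
  have hWH : Wᴴ * Mu = 0 := by
    have := congrArg Matrix.conjTranspose hUW
    rwa [Matrix.conjTranspose_mul, Matrix.conjTranspose_conjTranspose,
      Matrix.conjTranspose_zero] at this
  -- trace(Aᴴ X0) = Σ d
  have htr0 : Matrix.trace (Aᴴ * X0) = ((∑ i, d i : ℝ) : ℂ) := by
    have hAH : Aᴴ = Mv * Muᴴ + Wᴴ := by
      rw [hA, Matrix.conjTranspose_add, Matrix.conjTranspose_mul,
        Matrix.conjTranspose_conjTranspose]
    rw [hAH, Matrix.add_mul, hX0]
    have h1 : Mv * Muᴴ * (Mu * D * Mvᴴ) = Mv * D * Mvᴴ := by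
      calc Mv * Muᴴ * (Mu * D * Mvᴴ) = Mv * ((Muᴴ * Mu) * (D * Mvᴴ)) := by
            simp only [Matrix.mul_assoc]
        _ = Mv * (D * Mvᴴ) := by rw [hU, Matrix.one_mul]
        _ = Mv * D * Mvᴴ := by rw [Matrix.mul_assoc]
    have h2 : Wᴴ * (Mu * D * Mvᴴ) = 0 := by
      calc Wᴴ * (Mu * D * Mvᴴ) = Wᴴ * Mu * (D * Mvᴴ) := by simp only [Matrix.mul_assoc]
        _ = 0 := by rw [hWH, Matrix.zero_mul]
    rw [h1, h2, Matrix.trace_add, Matrix.trace_zero, add_zero, Matrix.trace_mul_comm,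
      ← Matrix.mul_assoc, hV, Matrix.one_mul, hD, Matrix.trace_diagonal]
    push_cast
    rfl
  have hnuc0 : nucNormMat X0 = ∑ i, d i := nucNormMat_UDV Mu Mv d hd hU hV
  have hvn : (Matrix.trace (Aᴴ * X)).re ≤ nucNormMat X :=
    re_trace_le_nucNorm A X (nsq_A_le Mu Mv W hU hV hUW hWV hWs)
  have hsub : Matrix.trace (Aᴴ * (X - X0)) = Matrix.trace (Aᴴ * X) - Matrix.trace (Aᴴ * X0) := by
    rw [Matrix.mul_sub, Matrix.trace_sub]
  rw [hsub, Complex.sub_re, htr0, Complex.ofReal_re, hnuc0]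
  linarith


lemma slice_tprod {n1 n2 l n3 : ℕ} (A : Tensor n1 n2 n3) (B : Tensor n2 l n3) (k : Fin n3) :
    slice (tprod A B) k = slice A k * slice B k := by
  ext i j
  simp [slice, tprod, Matrix.mul_apply]

lemma slice_hconj {n1 n2 n3 : ℕ} (A : Tensor n1 n2 n3) (k : Fin n3) :
    slice (hconj A) k = (slice A k)ᴴ := by
  ext i j
  simp [slice, hconj, Matrix.conjTranspose_apply]

lemma tinner_eq_sum_trace {n1 n2 n3 : ℕ} (A B : Tensor n1 n2 n3) :
    tinner A B = ∑ k, Matrix.trace ((slice A k)ᴴ * slice B k) := by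
  have h1 : tinner A B = ∑ k, ∑ j, ∑ i, (starRingEnd ℂ) (A i j k) * B i j k :=
    calc tinner A B = ∑ j, ∑ i, ∑ k, (starRingEnd ℂ) (A i j k) * B i j k := Finset.sum_comm
      _ = ∑ j, ∑ k, ∑ i, (starRingEnd ℂ) (A i j k) * B i j k :=
          Finset.sum_congr rfl fun j _ => Finset.sum_comm
      _ = ∑ k, ∑ j, ∑ i, (starRingEnd ℂ) (A i j k) * B i j k := Finset.sum_comm
  rw [h1]
  refine Finset.sum_congr rfl fun k _ => ?_
  simp [Matrix.trace, Matrix.diag, Matrix.mul_apply, Matrix.conjTranspose_apply, slice]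

end AuxSubgrad

/-- **Subgradient of the tensor nuclear norm.** -/
theorem subgradient_of_tNucNorm {n1 n2 n3 r : ℕ} (X0 : Tensor n1 n2 n3)
    (U : Tensor n1 r n3) (S : Tensor r r n3) (V : Tensor n2 r n3)
    (hsvd : IsSkinnyTSVD X0 r U S V) (W : Tensor n1 n2 n3)
    (hUW : tprod (hconj U) W = 0) (hWV : tprod W V = 0) (hW : tSpecNorm W ≤ 1) :
    ∀ X : Tensor n1 n2 n3,
      tNucNorm X0 + (tinner (tprod U (hconj V) + W) (X - X0)).re ≤ tNucNorm X := by
  intro X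
  rw [tinner_eq_sum_trace]
  unfold tNucNorm
  rw [Complex.re_sum, ← Finset.sum_add_distrib]
  refine Finset.sum_le_sum fun k _ => ?_
  -- slice-level data
  set Mu := slice U k with hMu
  set Mv := slice V k with hMv
  set Wk := slice W k with hWk
  set d : Fin r → ℝ := fun i => (S i i k).re with hdd
  have hSk : slice S k = Matrix.diagonal (fun i => (d i : ℂ)) := by
    ext i j
    by_cases h : i = j
    · subst h
      rw [Matrix.diagonal_apply_eq]
      refine Complex.ext ?_ ?_
      · simp [slice, hdd]
      · simp [slice, hdd, (hsvd.S_real_nonneg k i).1]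
    · rw [Matrix.diagonal_apply_ne _ h]
      exact hsvd.S_diag k i j h
  have hX0k : slice X0 k = Mu * Matrix.diagonal (fun i => (d i : ℂ)) * Mvᴴ := by
    rw [hsvd.factor, slice_tprod, slice_tprod, slice_hconj, hSk, Matrix.mul_assoc]
  have hAk : slice (tprod U (hconj V) + W) k = Mu * Mvᴴ + Wk := by
    have : slice (tprod U (hconj V) + W) k
        = slice (tprod U (hconj V)) k + slice W k := by
      ext i j; rfl
    rw [this, slice_tprod, slice_hconj]
  have hXmk : slice (X - X0) k = slice X k - slice X0 k := by
    ext i j; rfl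
  have hUWk : Muᴴ * Wk = 0 := by
    have := congrArg (fun T => slice T k) hUW
    rw [slice_tprod, slice_hconj] at this
    rw [hMu, hWk, this]
    ext i j; rfl
  have hWVk : Wk * Mv = 0 := by
    have := congrArg (fun T => slice T k) hWV
    rw [slice_tprod] at this
    rw [hWk, hMv, this]
    ext i j; rfl
  have hWsk : specNormMat Wk ≤ 1 := by
    unfold tSpecNorm at hW
    exact le_trans (le_ciSup (Set.Finite.bddAbove
      (Set.finite_range fun k => specNormMat (slice W k))) k) hW
  have key := matrix_subgrad Mu Mv d (fun i => (hsvd.S_real_nonneg k i).2) Wk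
    (hsvd.U_orth k) (hsvd.V_orth k) hUWk hWVk hWsk (slice X k)
  rw [hX0k, hAk, hXmk, hX0k]
  exact key

end TC
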